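/- Let f, g ∈ L^1(B_R(0)) be nonnegative, radially symmetric, radially nonincreasing (rearranged) functions on a ball. If for every convex nondecreasing function Φ : [0,∞) → [0,∞) with Φ(0) = 0 one has ∫ Φ(f) dx ≤ ∫ Φ(g) dx, then f is less concentrated than g, i.e. ∫_{B_r(0)} f dx ≤ ∫_{B_r(0)} g dx for all 0 < r ≤ R. -/

import Mathlib

open MeasureTheory Set Metric

/-- If two rearranged (radial, nonnegative, radially nonincreasing) integrable functions on a
ball satisfy `∫ Φ(f) ≤ ∫ Φ(g)` for every convex nondecreasing `Φ : [0,∞) → [0,∞)` with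
`Φ(0) = 0`, then `f` is less concentrated than `g`. -/
theorem concentration_of_convex_means {N : ℕ} (R : ℝ) (hR : 0 < R)
    (f g : EuclideanSpace ℝ (Fin N) → ℝ)
    (hf_int : IntegrableOn f (ball (0 : EuclideanSpace ℝ (Fin N)) R))
    (hg_int : IntegrableOn g (ball (0 : EuclideanSpace ℝ (Fin N)) R))
    (hf_nn : ∀ x, 0 ≤ f x) (hg_nn : ∀ x, 0 ≤ g x)
    (hf_rd : ∀ x y : EuclideanSpace ℝ (Fin N), ‖x‖ ≤ ‖y‖ → f y ≤ f x)
    (hg_rd : ∀ x y : EuclideanSpace ℝ (Fin N), ‖x‖ ≤ ‖y‖ → g y ≤ g x)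
    (h : ∀ Φ : ℝ → ℝ, ConvexOn ℝ (Ici 0) Φ → MonotoneOn Φ (Ici 0) →
      (∀ t ∈ Ici (0:ℝ), 0 ≤ Φ t) → Φ 0 = 0 →
      ∫ x in ball (0 : EuclideanSpace ℝ (Fin N)) R, Φ (f x) ≤
        ∫ x in ball (0 : EuclideanSpace ℝ (Fin N)) R, Φ (g x)) :
    ∀ r : ℝ, 0 < r → r ≤ R →
      ∫ x in ball (0 : EuclideanSpace ℝ (Fin N)) r, f x ≤
        ∫ x in ball (0 : EuclideanSpace ℝ (Fin N)) r, g x := by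
  intro r hr hrR
  rcases Nat.eq_zero_or_pos N with hN | hN
  · subst hN
    have hall : ∀ x : EuclideanSpace ℝ (Fin 0), x = 0 := fun x => Subsingleton.elim x 0
    have hball : ball (0 : EuclideanSpace ℝ (Fin 0)) r = ball 0 R := by
      ext x
      simp [mem_ball, hall x, hr, hR]
    rw [hball]
    have := h id (convexOn_id (convex_Ici 0)) (monotone_id.monotoneOn _)
      (fun t ht => ht) rfl
    simpa using this
  · -- choose a point of norm exactly r
    set xr : EuclideanSpace ℝ (Fin N) := r • EuclideanSpace.single ⟨0, hN⟩ (1 : ℝ) with hxr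
    have hxrnorm : ‖xr‖ = r := by
      rw [hxr, norm_smul, EuclideanSpace.norm_single]
      simp [abs_of_pos hr]
    set c := g xr with hc
    have hc0 : 0 ≤ c := hg_nn xr
    set Φ : ℝ → ℝ := fun t => max (t - c) 0 with hΦdef
    have hΦcont : Continuous Φ := (continuous_id.sub continuous_const).max continuous_const
    have hΦconv : ConvexOn ℝ (Ici 0) Φ := by
      have h1 : ConvexOn ℝ (Ici (0 : ℝ)) (fun t => t - c) :=
        (convexOn_id (convex_Ici 0)).sub (concaveOn_const c (convex_Ici 0))
      exact h1.sup (convexOn_const 0 (convex_Ici 0))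
    have hΦmono : MonotoneOn Φ (Ici 0) := by
      intro a _ b _ hab
      exact max_le_max (by linarith) le_rfl
    have hΦnn : ∀ t ∈ Ici (0 : ℝ), 0 ≤ Φ t := fun t _ => le_max_right _ _
    have hΦ0 : Φ 0 = 0 := max_eq_right (by linarith)
    have key := h Φ hΦconv hΦmono hΦnn hΦ0
    have hsub : ball (0 : EuclideanSpace ℝ (Fin N)) r ⊆ ball 0 R := ball_subset_ball hrR
    have hΦf_int : IntegrableOn (fun x => Φ (f x)) (ball 0 R) := by
      refine MeasureTheory.Integrable.mono hf_int (hΦcont.comp_aestronglyMeasurable hf_int.1) (ae_of_all _ fun x => ?_)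
      rw [Real.norm_eq_abs, Real.norm_eq_abs, abs_of_nonneg (le_max_right _ _),
        abs_of_nonneg (hf_nn x)]
      exact max_le (by linarith [hf_nn x]) (hf_nn x)
    have hΦg_int : IntegrableOn (fun x => Φ (g x)) (ball 0 R) := by
      refine MeasureTheory.Integrable.mono hg_int (hΦcont.comp_aestronglyMeasurable hg_int.1) (ae_of_all _ fun x => ?_)
      rw [Real.norm_eq_abs, Real.norm_eq_abs, abs_of_nonneg (le_max_right _ _),
        abs_of_nonneg (hg_nn x)]
      exact max_le (by linarith [hg_nn x]) (hg_nn x)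
    have hfr : IntegrableOn f (ball 0 r) := hf_int.mono_set hsub
    have hgr : IntegrableOn g (ball 0 r) := hg_int.mono_set hsub
    have hcr : IntegrableOn (fun _ : EuclideanSpace ℝ (Fin N) => c) (ball 0 r) :=
      integrableOn_const (measure_ball_lt_top : volume (ball (0 : EuclideanSpace ℝ (Fin N)) r) < ⊤).ne enorm_ne_top
    -- step 1 : ∫_{B_r} (f - c) ≤ ∫_{B_r} Φ ∘ f
    have step1 : (∫ x in ball (0 : EuclideanSpace ℝ (Fin N)) r, (f x - c)) ≤
        ∫ x in ball (0 : EuclideanSpace ℝ (Fin N)) r, Φ (f x) :=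
      integral_mono (hfr.sub hcr) (hΦf_int.mono_set hsub) (fun x => le_max_left _ _)
    -- step 2 : ∫_{B_r} Φ ∘ f ≤ ∫_{B_R} Φ ∘ f
    have step2 : (∫ x in ball (0 : EuclideanSpace ℝ (Fin N)) r, Φ (f x)) ≤
        ∫ x in ball (0 : EuclideanSpace ℝ (Fin N)) R, Φ (f x) :=
      setIntegral_mono_set hΦf_int (ae_of_all _ fun x => le_max_right _ _)
        (HasSubset.Subset.eventuallyLE hsub)
    -- step 4 : ∫_{B_R} Φ ∘ g = ∫_{B_r} Φ ∘ g
    have step4 : (∫ x in ball (0 : EuclideanSpace ℝ (Fin N)) R, Φ (g x)) =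
        ∫ x in ball (0 : EuclideanSpace ℝ (Fin N)) r, Φ (g x) := by
      refine setIntegral_eq_of_subset_of_forall_diff_eq_zero measurableSet_ball hsub
        fun x hx => ?_
      have hxr' : r ≤ ‖x‖ := by
        have := hx.2
        rw [mem_ball, dist_zero_right] at this
        linarith [not_lt.1 this]
      have : g x ≤ c := by
        rw [hc]
        exact hg_rd xr x (by rw [hxrnorm]; exact hxr')
      exact max_eq_right (by linarith)
    -- step 5 : ∫_{B_r} Φ ∘ g = ∫_{B_r} (g - c)
    have step5 : (∫ x in ball (0 : EuclideanSpace ℝ (Fin N)) r, Φ (g x)) =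
        ∫ x in ball (0 : EuclideanSpace ℝ (Fin N)) r, (g x - c) := by
      refine setIntegral_congr_fun measurableSet_ball fun x hx => ?_
      have hxlt : ‖x‖ ≤ r := by
        rw [mem_ball, dist_zero_right] at hx
        linarith
      have : c ≤ g x := by
        rw [hc]
        exact hg_rd x xr (by rw [hxrnorm]; exact hxlt)
      exact max_eq_left (by linarith)
    have hsf : (∫ x in ball (0 : EuclideanSpace ℝ (Fin N)) r, (f x - c)) =
        (∫ x in ball (0 : EuclideanSpace ℝ (Fin N)) r, f x) -
          (volume (ball (0 : EuclideanSpace ℝ (Fin N)) r)).toReal * c := by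
      rw [integral_sub hfr hcr, setIntegral_const, smul_eq_mul]
      rfl
    have hsg : (∫ x in ball (0 : EuclideanSpace ℝ (Fin N)) r, (g x - c)) =
        (∫ x in ball (0 : EuclideanSpace ℝ (Fin N)) r, g x) -
          (volume (ball (0 : EuclideanSpace ℝ (Fin N)) r)).toReal * c := by
      rw [integral_sub hgr hcr, setIntegral_const, smul_eq_mul]
      rfl
    rw [hsf] at step1
    rw [step4, step5, hsg] at key
    linarith
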